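/- If H is an n×n symmetric positive definite matrix and B is an n×m matrix of full column rank (n ≥ m ≥ 1), and C is an m×m symmetric positive semidefinite matrix, then the saddle-point matrix K = [[H, B], [Bᵀ, -C]] is nonsingular. -/

import Mathlib

open Matrix

lemma aux_ker_eq_bot {n m : ℕ} (B : Matrix (Fin n) (Fin m) ℝ) (hB : B.rank = m) :
    LinearMap.ker B.mulVecLin = ⊥ := by
  have h := LinearMap.finrank_range_add_finrank_ker B.mulVecLin
  rw [Matrix.rank] at hB
  rw [hB, Module.finrank_fintype_fun_eq_card, Fintype.card_fin] at h
  have : Module.finrank ℝ (LinearMap.ker B.mulVecLin) = 0 := by omega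
  exact Submodule.finrank_eq_zero.mp this

/-- If `H` is an `n×n` symmetric positive definite matrix, `B` is an `n×m` matrix of full
column rank (`n ≥ m ≥ 1`), and `C` is an `m×m` symmetric positive semidefinite matrix, then
the saddle-point matrix `K = [[H, B], [Bᵀ, -C]]` is nonsingular. -/
theorem saddle_point_nonsingular {n m : ℕ} (hm : 1 ≤ m) (hmn : m ≤ n)
    (H : Matrix (Fin n) (Fin n) ℝ) (B : Matrix (Fin n) (Fin m) ℝ)
    (C : Matrix (Fin m) (Fin m) ℝ)
    (hH : H.PosDef) (hHsymm : Hᵀ = H)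
    (hB : B.rank = m)
    (hC : C.PosSemidef) (hCsymm : Cᵀ = C) :
    IsUnit (Matrix.fromBlocks H B Bᵀ (-C)).det := by
  rw [isUnit_iff_ne_zero, Ne, ← Matrix.exists_mulVec_eq_zero_iff]
  rintro ⟨v, hv, hKv⟩
  set x : Fin n → ℝ := v ∘ Sum.inl with hx
  set y : Fin m → ℝ := v ∘ Sum.inr with hy
  have hvelim : v = Sum.elim x y := by
    funext s; cases s <;> rfl
  rw [hvelim, Matrix.fromBlocks_mulVec] at hKv
  have h1 : H *ᵥ x + B *ᵥ y = 0 := by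
    funext i; exact congrFun hKv (Sum.inl i)
  have h2 : Bᵀ *ᵥ x + (-C) *ᵥ y = 0 := by
    funext i; exact congrFun hKv (Sum.inr i)
  -- x ⬝ᵥ (H *ᵥ x) + y ⬝ᵥ (C *ᵥ y) = 0
  have e1 : x ⬝ᵥ (H *ᵥ x) + x ⬝ᵥ (B *ᵥ y) = 0 := by
    rw [← dotProduct_add, h1, dotProduct_zero]
  have e2 : y ⬝ᵥ (Bᵀ *ᵥ x) - y ⬝ᵥ (C *ᵥ y) = 0 := by
    have := congrArg (fun w => y ⬝ᵥ w) h2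
    simpa [dotProduct_add, Matrix.neg_mulVec, sub_eq_add_neg] using this
  have swap : x ⬝ᵥ (B *ᵥ y) = y ⬝ᵥ (Bᵀ *ᵥ x) := by
    rw [Matrix.dotProduct_mulVec, ← Matrix.mulVec_transpose, dotProduct_comm]
  have key : x ⬝ᵥ (H *ᵥ x) + y ⬝ᵥ (C *ᵥ y) = 0 := by
    rw [swap] at e1; linarith
  have hxq : (0:ℝ) ≤ x ⬝ᵥ (H *ᵥ x) := by
    simpa using hH.posSemidef.dotProduct_mulVec_nonneg x
  have hyq : (0:ℝ) ≤ y ⬝ᵥ (C *ᵥ y) := by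
    simpa using hC.dotProduct_mulVec_nonneg y
  have hx0 : x = 0 := by
    by_contra hxne
    have := hH.dotProduct_mulVec_pos hxne
    simp only [star_trivial] at this
    linarith
  have hBy : B *ᵥ y = 0 := by
    rw [hx0] at h1; simpa using h1
  have hy0 : y = 0 := by
    have : y ∈ LinearMap.ker B.mulVecLin := by
      simpa [Matrix.mulVecLin_apply] using hBy
    rw [aux_ker_eq_bot B hB] at this
    simpa using this
  apply hv
  rw [hvelim, hx0, hy0]
  funext s; cases s <;> rfl
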